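/- Let X be a measurable space and κ a Markov kernel from X to X. Fix H ∈ ℕ and probability measures μ_0, μ_1, …, μ_{H−1} on X satisfying μ_{h+1} = μ_h.bind κ for every 0 ≤ h < H−1. Let r : X → ℝ and q_0, q_1, …, q_H : X → ℝ be bounded measurable functions with q_H = 0. Then | ∫ q_0 dμ_0 − ∑_{h=0}^{H−1} ∫ r dμ_h | ≤ ∑_{h=0}^{H−1} ( ∫ ( q_h(x) − r(x) − ∫ q_{h+1}(y) d(κ x)(y) )² dμ_h(x) )^{1/2}. -/

import Mathlib

open MeasureTheory ProbabilityTheory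

private lemma bdd_integrable {X : Type*} [MeasurableSpace X] {μ : Measure X}
    [IsFiniteMeasure μ] {f : X → ℝ} (hf : Measurable f) {M : ℝ} (hM : ∀ x, |f x| ≤ M) :
    Integrable f μ :=
  ⟨hf.aestronglyMeasurable, HasFiniteIntegral.of_bounded (C := M) (ae_of_all _ fun x => hM x)⟩

private lemma abs_integral_le_sqrt_integral_sq {X : Type*} [MeasurableSpace X]
    (μ : Measure X) [IsProbabilityMeasure μ] {g : X → ℝ} (hg : Measurable g)
    {M : ℝ} (hM : ∀ x, |g x| ≤ M) :
    |∫ x, g x ∂μ| ≤ Real.sqrt (∫ x, (g x) ^ 2 ∂μ) := by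
  have hmem : MemLp g 2 μ :=
    MemLp.of_bound hg.aestronglyMeasurable M (ae_of_all _ fun x => hM x)
  have hvar := ProbabilityTheory.variance_nonneg g μ
  rw [ProbabilityTheory.variance_eq_sub hmem] at hvar
  have h1 : (∫ x, g x ∂μ) ^ 2 ≤ ∫ x, (g x) ^ 2 ∂μ := by
    have : μ[g ^ 2] = ∫ x, (g x) ^ 2 ∂μ := by simp [Pi.pow_apply]
    rw [this] at hvar; linarith
  calc |∫ x, g x ∂μ| = Real.sqrt ((∫ x, g x ∂μ) ^ 2) := (Real.sqrt_sq_eq_abs _).symm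
    _ ≤ Real.sqrt (∫ x, (g x) ^ 2 ∂μ) := Real.sqrt_le_sqrt h1

private lemma integral_bind_eq {X : Type*} [MeasurableSpace X]
    (κ : ProbabilityTheory.Kernel X X) [IsMarkovKernel κ]
    (μ : Measure X) [IsProbabilityMeasure μ] {f : X → ℝ} (hf : Measurable f)
    {M : ℝ} (hM : ∀ x, |f x| ≤ M) :
    ∫ y, f y ∂(μ.bind (fun x => κ x)) = ∫ x, ∫ y, f y ∂(κ x) ∂μ := by
  have hbind : μ.bind (fun x => κ x) = (μ ⊗ₘ κ).snd := by
    ext s hs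
    rw [Measure.bind_apply hs (Kernel.measurable κ).aemeasurable, Measure.snd_apply hs,
      Measure.compProd_apply (measurable_snd hs)]
    rfl
  haveI : IsProbabilityMeasure (μ ⊗ₘ κ) := by
    constructor
    rw [Measure.compProd_apply_univ]
    exact measure_univ
  have hint : Integrable (fun z : X × X => f z.2) (μ ⊗ₘ κ) :=
    bdd_integrable (hf.comp measurable_snd) (fun z => hM z.2)
  rw [hbind, Measure.snd,
    integral_map measurable_snd.aemeasurable hf.aestronglyMeasurable,
    Measure.integral_compProd hint]

/-- The value-evaluation error of a candidate value function is bounded by the sum over steps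
of the `L²(μ h)`-norms of its Bellman residuals: telescoping value-difference identity combined
with Jensen's (Cauchy–Schwarz) inequality for the probability measures `μ h`. -/
theorem value_error_le_sum_bellman_residual_L2 {X : Type*} [MeasurableSpace X]
    (κ : ProbabilityTheory.Kernel X X) [IsMarkovKernel κ]
    (H : ℕ) (μ : ℕ → Measure X)
    (hprob : ∀ h < H, IsProbabilityMeasure (μ h))
    (hstep : ∀ h, h + 1 < H → μ (h + 1) = (μ h).bind (fun x => κ x))
    (r : X → ℝ) (hr : Measurable r) (hrb : ∃ M : ℝ, ∀ x, |r x| ≤ M)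
    (q : ℕ → X → ℝ) (hq : ∀ h ≤ H, Measurable (q h))
    (hqb : ∀ h ≤ H, ∃ M : ℝ, ∀ x, |q h x| ≤ M)
    (hqH : q H = 0) :
    |(∫ x, q 0 x ∂(μ 0)) - ∑ h ∈ Finset.range H, ∫ x, r x ∂(μ h)| ≤
      ∑ h ∈ Finset.range H,
        Real.sqrt (∫ x, (q h x - r x - ∫ y, q (h + 1) y ∂(κ x)) ^ 2 ∂(μ h)) := by
  rcases Nat.eq_zero_or_pos H with hH | hH
  · subst hH; rw [hqH]; simp
  obtain ⟨Mr, hMr⟩ := hrb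
  -- Bellman residual
  set ε : ℕ → X → ℝ := fun h x => q h x - r x - ∫ y, q (h + 1) y ∂(κ x) with hε
  -- measurability of the kernel integral
  have hkmeas : ∀ h, h ≤ H → Measurable (fun x => ∫ y, q h y ∂(κ x)) := by
    intro h hh
    exact (MeasureTheory.StronglyMeasurable.integral_kernel_prod_right
      (κ := κ) (f := fun _ y => q h y)
      ((hq h hh).stronglyMeasurable.comp_measurable measurable_snd)).measurable
  have hkbdd : ∀ h (hh : h ≤ H), ∀ x, |∫ y, q h y ∂(κ x)| ≤ (hqb h hh).choose := by
    intro h hh x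
    have := (hqb h hh).choose_spec
    have h1 : ‖∫ y, q h y ∂(κ x)‖ ≤ (hqb h hh).choose * ((κ x) Set.univ).toReal :=
      norm_integral_le_of_norm_le_const (ae_of_all _ fun y => this y)
    simpa [measure_univ] using h1
  have hεmeas : ∀ h < H, Measurable (ε h) := by
    intro h hh
    exact ((hq h hh.le).sub hr).sub (hkmeas (h + 1) hh)
  have hεbdd : ∀ h (hh : h < H), ∀ x,
      |ε h x| ≤ (hqb h hh.le).choose + Mr + (hqb (h + 1) hh).choose := by
    intro h hh x
    have h1 := (hqb h hh.le).choose_spec x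
    have h2 := hMr x
    have h3 := hkbdd (h + 1) hh x
    calc |ε h x| ≤ |q h x - r x| + |∫ y, q (h + 1) y ∂(κ x)| := abs_sub _ _
      _ ≤ (|q h x| + |r x|) + |∫ y, q (h + 1) y ∂(κ x)| := by
          gcongr; exact abs_sub _ _
      _ ≤ (hqb h hh.le).choose + Mr + (hqb (h + 1) hh).choose := by
          gcongr
  -- telescoping identity
  have hG : ∀ h < H,
      ∫ x, ε h x ∂(μ h) =
        (∫ x, q h x ∂(μ h)) - (∫ x, r x ∂(μ h)) - ∫ x, q (h + 1) x ∂(μ (h + 1)) := by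
    intro h hh
    haveI := hprob h hh
    have hqint : Integrable (q h) (μ h) :=
      bdd_integrable (hq h hh.le) (hqb h hh.le).choose_spec
    have hrint : Integrable r (μ h) := bdd_integrable hr hMr
    have hkint : Integrable (fun x => ∫ y, q (h + 1) y ∂(κ x)) (μ h) :=
      bdd_integrable (hkmeas (h + 1) hh) (hkbdd (h + 1) hh)
    have hsplit : ∫ x, ε h x ∂(μ h) =
        (∫ x, q h x ∂(μ h)) - (∫ x, r x ∂(μ h)) -
          ∫ x, (∫ y, q (h + 1) y ∂(κ x)) ∂(μ h) := by
      rw [hε]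
      rw [integral_sub (f := fun x => q h x - r x) (hqint.sub hrint) hkint,
        integral_sub hqint hrint]
    rw [hsplit]
    congr 1
    rcases Nat.lt_or_ge (h + 1) H with hh1 | hh1
    · haveI := hprob (h + 1) hh1
      rw [hstep h hh1,
        integral_bind_eq κ (μ h) (hq (h + 1) hh1.le) (hqb (h + 1) hh1.le).choose_spec]
    · have hH1 : h + 1 = H := le_antisymm hh hh1
      rw [hH1, hqH]
      simp
  have htel : (∫ x, q 0 x ∂(μ 0)) - ∑ h ∈ Finset.range H, ∫ x, r x ∂(μ h) =
      ∑ h ∈ Finset.range H, ∫ x, ε h x ∂(μ h) := by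
    have : ∑ h ∈ Finset.range H, ∫ x, ε h x ∂(μ h) =
        ∑ h ∈ Finset.range H,
          (((∫ x, q h x ∂(μ h)) - ∫ x, q (h + 1) x ∂(μ (h + 1))) - ∫ x, r x ∂(μ h)) := by
      refine Finset.sum_congr rfl fun h hh => ?_
      rw [hG h (Finset.mem_range.mp hh)]; ring
    rw [this, Finset.sum_sub_distrib, Finset.sum_range_sub']
    have hzero : ∫ x, q H x ∂(μ H) = 0 := by rw [hqH]; simp
    rw [hzero]; ring
  rw [htel]
  calc |∑ h ∈ Finset.range H, ∫ x, ε h x ∂(μ h)|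
      ≤ ∑ h ∈ Finset.range H, |∫ x, ε h x ∂(μ h)| := Finset.abs_sum_le_sum_abs _ _
    _ ≤ ∑ h ∈ Finset.range H, Real.sqrt (∫ x, (ε h x) ^ 2 ∂(μ h)) := by
        refine Finset.sum_le_sum fun h hh => ?_
        have hh' := Finset.mem_range.mp hh
        haveI := hprob h hh'
        exact abs_integral_le_sqrt_integral_sq (μ h) (hεmeas h hh') (hεbdd h hh')
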